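/- The function f : ℕ∞ → ℕ∞ defined by f(n) = n ∸ 1 (truncated subtraction, with f(∞) = ∞) is the unique continuous function (with respect to the ω-cpo structure on ℕ∞) satisfying f(n) = min(f₁(n), f₂(n)) for all n, where f₁(n) = if n < 2 then 0 else 1 + f(n − 1) and f₂(n) = if n < 1 then 0 else 2 + f(n − 1). -/

import Mathlib

open scoped Classical

/-- Production of a finite io-word (`true` = '+' output, `false` = '−' input)
on a finite input budget. -/
def prodList : List Bool → ℕ → ℕ
  | [], _ => 0
  | true :: l, n => 1 + prodList l n
  | false :: _, 0 => 0
  | false :: l, n + 1 => prodList l n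

/-- The production function ⟦σ⟧ : ℕ∞ → ℕ∞ of an io-sequence σ (a finite or
infinite word over {−,+}), obtained as the supremum over finite prefixes of σ
and finite budgets below the argument. -/
noncomputable def prodSeq (σ : Stream'.Seq Bool) (n : ℕ∞) : ℕ∞ :=
  ⨆ (k : ℕ) (m : ℕ) (_ : (m : ℕ∞) ≤ n), (prodList (σ.take k) m : ℕ∞)

/-- ω-continuity (together with monotonicity) on the ω-cpo ℕ∞. -/
def NEContinuous (f : ℕ∞ → ℕ∞) : Prop :=
  Monotone f ∧ ∀ c : ℕ → ℕ∞, Monotone c → f (⨆ k, c k) = ⨆ k, f (c k)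

/-- Rational (eventually periodic, possibly finite) io-sequences. -/
def RationalSeq (σ : Stream'.Seq Bool) : Prop :=
  (∃ l : List Bool, σ = Stream'.Seq.ofList l) ∨
  ∃ (u v : List Bool) (h : v ≠ []),
    σ = (Stream'.Seq.ofList u).append (Stream'.Seq.ofStream (Stream'.cycle v h))

/-- Periodically increasing functions on ℕ∞: monotone, ω-continuous,
determined at ∞ by the finite values, and eventually linear-periodic. -/
def PerInc (f : ℕ∞ → ℕ∞) : Prop :=
  Monotone f ∧
  (∀ c : ℕ → ℕ∞, Monotone c → f (⨆ k, c k) = ⨆ k, f (c k)) ∧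
  (f ⊤ = ⨆ n : ℕ, f n) ∧
  ∃ N p q : ℕ, 1 ≤ p ∧ ∀ n : ℕ, N ≤ n → f ((n : ℕ∞) + (p : ℕ∞)) = f n + (q : ℕ∞)

/-- The function n ↦ n ∸ 1 is the unique ω-continuous solution of the
production equation system of the Pascal stream function. -/
theorem pascal_production_unique :
    (NEContinuous (fun n : ℕ∞ => n - 1) ∧
      ∀ n : ℕ∞,
        n - 1 =
          min (if n < 2 then 0 else 1 + ((n - 1) - 1))
              (if n < 1 then 0 else 2 + ((n - 1) - 1))) ∧
    ∀ f : ℕ∞ → ℕ∞, NEContinuous f →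
      (∀ n : ℕ∞,
        f n =
          min (if n < 2 then 0 else 1 + f (n - 1))
              (if n < 1 then 0 else 2 + f (n - 1))) →
      f = fun n : ℕ∞ => n - 1 := by
  have gc : GaloisConnection (fun n : ℕ∞ => n - 1) (fun n : ℕ∞ => n + 1) :=
    fun _ _ => tsub_le_iff_right
  have htop : (⨆ k : ℕ, (k : ℕ∞)) = ⊤ := by
    rw [iSup_eq_top]
    intro b hb
    lift b to ℕ using hb.ne
    exact ⟨b + 1, by exact_mod_cast Nat.lt_succ_self b⟩
  have hkey : ∀ n : ℕ∞,
      n - 1 = min (if n < 2 then 0 else 1 + ((n - 1) - 1))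
        (if n < 1 then 0 else 2 + ((n - 1) - 1)) := by
    intro n
    induction n using ENat.recTopCoe with
    | top => simp
    | coe m =>
      match m with
      | 0 => simp
      | 1 => simp
      | (k+2) =>
        have h2 : ¬ ((k+2 : ℕ) : ℕ∞) < 2 := by exact_mod_cast by omega
        have h1 : ¬ ((k+2 : ℕ) : ℕ∞) < 1 := by exact_mod_cast by omega
        rw [if_neg h2, if_neg h1]
        push_cast
        show ((k:ℕ∞)+2) - 1 = min (1 + (((k:ℕ∞)+2) - 1 - 1)) (2 + (((k:ℕ∞)+2) - 1 - 1))
        have e1 : ((k:ℕ∞)+2) - 1 = (k:ℕ∞)+1 := rfl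
        have e2 : ((k:ℕ∞)+1) - 1 = (k:ℕ∞) := rfl
        rw [e1, e2, min_eq_left (by gcongr <;> norm_num), add_comm]
  refine ⟨⟨⟨fun a b h => tsub_le_tsub_right h 1, fun c _ => gc.l_iSup⟩, hkey⟩, ?_⟩
  intro f hf heq
  have hfin : ∀ m : ℕ, f (m : ℕ∞) = (m : ℕ∞) - 1 := by
    intro m
    induction m with
    | zero => simpa using heq 0
    | succ k ih =>
      have h := heq ((k+1 : ℕ) : ℕ∞)
      match k with
      | 0 => simpa using h
      | j + 1 =>
        have h2 : ¬ ((j+2 : ℕ) : ℕ∞) < 2 := by exact_mod_cast by omega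
        have h1 : ¬ ((j+2 : ℕ) : ℕ∞) < 1 := by exact_mod_cast by omega
        rw [if_neg h2, if_neg h1] at h
        have e1 : ((j+2 : ℕ) : ℕ∞) - 1 = ((j+1 : ℕ) : ℕ∞) := by push_cast; rfl
        have e2 : ((j+1 : ℕ) : ℕ∞) - 1 = (j:ℕ∞) := by push_cast; rfl
        rw [e1, ih, e2] at h
        have e3 : ((j+1+1 : ℕ) : ℕ∞) - 1 = ((j+1 : ℕ) : ℕ∞) := by push_cast; rfl
        rw [h, e3, min_eq_left (by gcongr <;> norm_num)]
        push_cast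
        rw [add_comm]
  funext n
  induction n using ENat.recTopCoe with
  | top =>
    have hc : Monotone (fun k : ℕ => (k : ℕ∞)) := Nat.mono_cast
    show f ⊤ = ⊤ - 1
    rw [show (⊤ : ℕ∞) = ⨆ k : ℕ, (k : ℕ∞) from htop.symm, hf.2 _ hc, gc.l_iSup]
    simp only [hfin]
  | coe m => exact hfin m
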